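/- arXiv:1308.4240 — 6 statements merged into one kernel-verified Lean document; each statement's English description precedes it below -/
import Mathlib

section
/- The Casoratian satisfies the Jacobi-type identity: W_γ[ W_γ[f_1,...,f_n,g], W_γ[f_1,...,f_n,h] ](x) = W_γ[f_1,...,f_n](x) · W_γ[f_1,...,f_n,g,h](x) for all n ≥ 0. -/
open Matrix Equiv

namespace CasAux

variable {R : Type*} [CommRing R]


variable {R : Type*} [CommRing R]

lemma perm_eq_one_or_swap {α : Type*} [DecidableEq α] (σ : Equiv.Perm α) (a b : α)
    (h : ∀ x, x ≠ a → x ≠ b → σ x = x) : σ = 1 ∨ σ = Equiv.swap a b := by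
  have key : ∀ x : α, x ≠ a → x ≠ b → σ x = x := h
  have ha : σ a = a ∨ σ a = b := by
    by_contra hc
    push_neg at hc
    have := h (σ a) hc.1 hc.2
    exact hc.1 (σ.injective this)
  have hb : σ b = a ∨ σ b = b := by
    by_contra hc
    push_neg at hc
    have := h (σ b) hc.1 hc.2
    exact hc.2 (σ.injective this)
  by_cases hab : a = b
  · subst hab
    left
    ext x
    by_cases hx : x = a
    · subst hx; rcases ha with h' | h' <;> simpa using h'
    · simpa using h x hx hx
  rcases ha with ha | ha
  · rcases hb with hb | hb
    · exact absurd (σ.injective (ha.trans hb.symm)) hab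
    · left; ext x
      by_cases hxa : x = a
      · subst hxa; simpa using ha
      by_cases hxb : x = b
      · subst hxb; simpa using hb
      · simpa using h x hxa hxb
  · rcases hb with hb | hb
    · right; ext x
      by_cases hxa : x = a
      · subst hxa; simp [ha, Equiv.swap_apply_left]
      by_cases hxb : x = b
      · subst hxb; simp [hb, Equiv.swap_apply_right]
      · simp [h x hxa hxb, Equiv.swap_apply_of_ne_of_ne hxa hxb]
    · exact absurd (σ.injective (ha.trans hb.symm)) hab

lemma det_eq_corner {k : ℕ} (X : Matrix (Fin k) (Fin k) R) (a b : Fin k) (hab : a ≠ b)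
    (hX : ∀ j l, l ≠ a → l ≠ b → X j l = if j = l then 1 else 0) :
    X.det = X a a * X b b - X b a * X a b := by
  classical
  rw [Matrix.det_apply]
  have hsub : ({1, Equiv.swap a b} : Finset (Equiv.Perm (Fin k))) ⊆ Finset.univ :=
    Finset.subset_univ _
  rw [← Finset.sum_subset hsub ?vanish]
  case vanish =>
    intro σ _ hσ
    simp only [Finset.mem_insert, Finset.mem_singleton] at hσ
    push_neg at hσ
    have : ¬ (∀ x, x ≠ a → x ≠ b → σ x = x) := by
      intro hfix
      rcases perm_eq_one_or_swap σ a b hfix with h1 | h2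
      · exact hσ.1 h1
      · exact hσ.2 h2
    push_neg at this
    obtain ⟨x, hxa, hxb, hσx⟩ := this
    have hzero : X (σ x) x = 0 := by
      rw [hX (σ x) x hxa hxb, if_neg hσx]
    have : (∏ i, X (σ i) i) = 0 := Finset.prod_eq_zero (Finset.mem_univ x) hzero
    rw [this, smul_zero]
  have hone_ne : (1 : Equiv.Perm (Fin k)) ≠ Equiv.swap a b := by
    intro h1
    have := congrArg (fun σ : Equiv.Perm (Fin k) => σ a) h1
    simp [Equiv.swap_apply_left] at this
    exact hab this
  rw [Finset.sum_insert (by simpa using hone_ne), Finset.sum_singleton]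
  have hprod1 : ∏ i, X ((1 : Equiv.Perm (Fin k)) i) i = X a a * X b b := by
    simp only [Equiv.Perm.one_apply]
    rw [← Finset.prod_subset (Finset.subset_univ ({a, b} : Finset (Fin k)))
      (fun x _ hx => ?_)]
    · rw [Finset.prod_pair hab]
    · simp only [Finset.mem_insert, Finset.mem_singleton] at hx
      push_neg at hx
      rw [hX x x hx.1 hx.2, if_pos rfl]
  have hprod2 : ∏ i, X (Equiv.swap a b i) i = X b a * X a b := by
    rw [← Finset.prod_subset (Finset.subset_univ ({a, b} : Finset (Fin k)))
      (fun x _ hx => ?_)]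
    · rw [Finset.prod_pair hab, Equiv.swap_apply_left, Equiv.swap_apply_right]
    · simp only [Finset.mem_insert, Finset.mem_singleton] at hx
      push_neg at hx
      rw [Equiv.swap_apply_of_ne_of_ne hx.1 hx.2, hX x x hx.1 hx.2, if_pos rfl]
  rw [hprod1, hprod2]
  simp [Equiv.Perm.sign_swap hab, sub_eq_add_neg]

lemma adjugate_eq_minor {m : ℕ} (M : Matrix (Fin (m+1)) (Fin (m+1)) R) (i j : Fin (m+1)) :
    adjugate M i j =
      (-1) ^ ((i : ℕ) + (j : ℕ)) * (M.submatrix j.succAbove i.succAbove).det := by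
  rw [Matrix.adjugate_apply, Matrix.det_succ_row _ j]
  rw [Finset.sum_eq_single i]
  · rw [Matrix.updateRow_self]
    simp only [Pi.single_eq_same]
    have : (M.updateRow j (Pi.single i 1)).submatrix j.succAbove i.succAbove
        = M.submatrix j.succAbove i.succAbove := by
      ext a c
      simp [Matrix.submatrix_apply, Matrix.updateRow_ne (Fin.succAbove_ne j a)]
    rw [this, add_comm (i : ℕ) (j : ℕ)]
    ring
  · intro k _ hk
    rw [Matrix.updateRow_self, Pi.single_eq_of_ne hk]
    ring
  · simp


lemma cancel_neg_one_pow (m : ℕ) {x y : R} (h : (-1:R)^m * x = (-1:R)^m * y) : x = y := by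
  have hmm : (-1:R)^m * (-1:R)^m = 1 := by
    rw [← pow_add]; exact Even.neg_one_pow ⟨m, rfl⟩
  calc x = ((-1:R)^m * (-1:R)^m) * x := by rw [hmm, one_mul]
  _ = (-1:R)^m * ((-1:R)^m * x) := by ring
  _ = (-1:R)^m * ((-1:R)^m * y) := by rw [h]
  _ = y := by rw [← mul_assoc, hmm, one_mul]

theorem djX {m : ℕ} (M : Matrix (Fin (m+2)) (Fin (m+2)) R) :
    M.det * (M.det *
      (M.submatrix (Fin.succ ∘ Fin.castSucc) (Fin.castSucc ∘ Fin.castSucc)).det)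
    = M.det * ((M.submatrix Fin.castSucc Fin.castSucc).det *
          (M.submatrix Fin.succ (Fin.succAbove ⟨m, by omega⟩)).det
        - (M.submatrix Fin.castSucc (Fin.succAbove ⟨m, by omega⟩)).det *
          (M.submatrix Fin.succ Fin.castSucc).det) := by
  classical
  set c1 : Fin (m+2) := ⟨m, by omega⟩ with hc1
  set c2 : Fin (m+2) := Fin.last (m+1) with hc2
  have hc12 : c1 ≠ c2 := by
    simp [hc1, hc2, Fin.ext_iff, Fin.val_last]
  set X : Matrix (Fin (m+2)) (Fin (m+2)) R := Matrix.of fun j l =>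
    if l = c1 then adjugate M j 0
    else if l = c2 then adjugate M j (Fin.last (m+1))
    else if j = l then 1 else 0 with hXdef
  set Y : Matrix (Fin (m+2)) (Fin (m+2)) R := Matrix.of fun j l =>
    if l = c1 then (if j = 0 then M.det else 0)
    else if l = c2 then (if j = Fin.last (m+1) then M.det else 0)
    else M j l with hYdef
  have hMX : M * X = Y := by
    ext j l
    by_cases h1 : l = c1
    · subst h1
      have : (M * X) j c1 = (M * adjugate M) j 0 := by
        simp only [Matrix.mul_apply, hXdef, Matrix.of_apply]
        simp
      rw [this, Matrix.mul_adjugate]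
      simp [hYdef, Matrix.one_apply, Matrix.smul_apply]
    by_cases h2 : l = c2
    · subst h2
      have : (M * X) j c2 = (M * adjugate M) j (Fin.last (m+1)) := by
        simp only [Matrix.mul_apply, hXdef, Matrix.of_apply, if_neg h1]
        simp [hc12.symm]
      rw [this, Matrix.mul_adjugate]
      simp [hYdef, Matrix.one_apply, Matrix.smul_apply, h1, hc2,
        (by rw [← hc2]; exact hc12.symm : Fin.last (m+1) ≠ c1)]
    · simp only [Matrix.mul_apply, hXdef, hYdef, Matrix.of_apply, if_neg h1, if_neg h2]
      rw [Finset.sum_eq_single l]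
      · simp
      · intro b _ hb; simp [if_neg h1, if_neg h2, hb]
      · simp
  have hEE : M.det * X.det = Y.det := by rw [← Matrix.det_mul, hMX]
  set tg := (M.submatrix Fin.castSucc Fin.castSucc).det with htg
  set bh := (M.submatrix Fin.succ c1.succAbove).det with hbh
  set th := (M.submatrix Fin.castSucc c1.succAbove).det with hth
  set bg := (M.submatrix Fin.succ Fin.castSucc).det with hbg
  set inr := (M.submatrix (Fin.succ ∘ Fin.castSucc) (Fin.castSucc ∘ Fin.castSucc)).det with hinr
  have hmm : (-1:R)^m * (-1)^m = 1 := by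
    rw [← pow_add]; exact Even.neg_one_pow ⟨m, rfl⟩
  have hzeroAbove : (0 : Fin (m+2)).succAbove = Fin.succ := Fin.succAbove_zero
  -- determinant of X
  have hdetX : X.det = (-1:R)^m * (tg * bh - th * bg) := by
    rw [det_eq_corner X c1 c2 hc12 (fun j l h1 h2 => by
      simp [hXdef, if_neg h1, if_neg h2])]
    have e11 : X c1 c1 = adjugate M c1 0 := by simp [hXdef]
    have e22 : X c2 c2 = adjugate M c2 (Fin.last (m+1)) := by simp [hXdef, hc12.symm]
    have e21 : X c2 c1 = adjugate M c2 0 := by simp [hXdef]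
    have e12 : X c1 c2 = adjugate M c1 (Fin.last (m+1)) := by simp [hXdef, hc12.symm]
    rw [e11, e22, e21, e12, adjugate_eq_minor, adjugate_eq_minor, adjugate_eq_minor,
      adjugate_eq_minor]
    have hcs : c2.succAbove = Fin.castSucc := by rw [hc2]; exact Fin.succAbove_last
    have hv2 : ((c2 : Fin (m+2)) : ℕ) = m + 1 := by rw [hc2]; simp
    have hv1 : ((c1 : Fin (m+2)) : ℕ) = m := by rw [hc1]
    simp only [Fin.val_zero, Fin.val_last, hzeroAbove, hcs, Fin.succAbove_last, hv1, hv2]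
    rw [← htg, ← hbh, ← hth, ← hbg]
    have h1 : (-1:R)^(m+0) = (-1)^m := by rw [add_zero]
    have h2 : (-1:R)^((m+1)+(m+1)) = 1 := Even.neg_one_pow ⟨m+1, rfl⟩
    have h3 : (-1:R)^((m+1)+0) = (-1)^m * (-1) := by rw [add_zero, pow_succ]
    have h4 : (-1:R)^(m+(m+1)) = -1 := by
      rw [show m + (m+1) = (m+m)+1 by omega, pow_succ, Even.neg_one_pow ⟨m, rfl⟩, one_mul]
    rw [h1, h2, h3, h4]
    ring
  -- determinant of Y
  have hY0 : Y 0 c1 = M.det := by simp [hYdef]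
  set Z : Matrix (Fin (m+1)) (Fin (m+1)) R := Y.submatrix Fin.succ c1.succAbove with hZdef
  have hcsl : c1.succAbove (Fin.last m) = c2 := by
    have h1 : c1 ≤ Fin.castSucc (Fin.last m) := by
      simp [Fin.le_def, hc1]
    rw [Fin.succAbove_of_le_castSucc _ _ h1, hc2, Fin.succ_last]
  have hcsm : ∀ k : Fin m, c1.succAbove (Fin.castSucc k) = Fin.castSucc (Fin.castSucc k) := by
    intro k
    refine Fin.succAbove_of_castSucc_lt _ _ ?_
    simp [Fin.lt_def, hc1, k.isLt]
  have hZlast : ∀ i : Fin (m+1), Z i (Fin.last m) = if i = Fin.last m then M.det else 0 := by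
    intro i
    rw [hZdef]
    simp only [Matrix.submatrix_apply, hcsl]
    rw [hYdef]
    simp only [Matrix.of_apply]
    rw [if_neg hc12.symm, if_pos trivial]
    have hiff : (Fin.succ i = Fin.last (m+1)) ↔ (i = Fin.last m) := by
      constructor
      · intro hh
        have := congrArg Fin.val hh
        simp [Fin.val_succ, Fin.val_last] at this
        exact Fin.ext this
      · intro hh; rw [hh, Fin.succ_last]
    by_cases hi : i = Fin.last m
    · rw [if_pos (hiff.mpr hi), if_pos hi]
    · rw [if_neg (fun hc => hi (hiff.mp hc)), if_neg hi]
  have hZsub : Z.submatrix (Fin.last m).succAbove (Fin.last m).succAbove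
      = M.submatrix (Fin.succ ∘ Fin.castSucc) (Fin.castSucc ∘ Fin.castSucc) := by
    ext i k
    rw [hZdef]
    simp only [Matrix.submatrix_apply, Fin.succAbove_last, Function.comp_apply, hcsm k]
    rw [hYdef]
    have hne1 : Fin.castSucc (Fin.castSucc k) ≠ c1 := by
      simp only [hc1, Fin.ext_iff, Fin.coe_castSucc]
      exact ne_of_lt k.isLt
    have hne2 : Fin.castSucc (Fin.castSucc k) ≠ c2 := by
      simp only [hc2, Fin.ext_iff, Fin.coe_castSucc, Fin.val_last]
      exact ne_of_lt (Nat.lt_succ_of_lt k.isLt)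
    simp [Matrix.of_apply, if_neg hne1, if_neg hne2]
  have hdetZ : Z.det = M.det * inr := by
    rw [Matrix.det_succ_column Z (Fin.last m), Finset.sum_eq_single (Fin.last m)]
    · rw [hZlast, if_pos rfl, hZsub, ← hinr]
      have : (-1:R)^(((Fin.last m : Fin (m+1)) : ℕ) + ((Fin.last m : Fin (m+1)) : ℕ)) = 1 :=
        Even.neg_one_pow ⟨((Fin.last m : Fin (m+1)) : ℕ), rfl⟩
      rw [this, one_mul]
    · intro i _ hi
      rw [hZlast, if_neg hi]
      ring
    · simp
  have hdetY : Y.det = (-1:R)^m * (M.det * (M.det * inr)) := by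
    rw [Matrix.det_succ_column Y c1, Finset.sum_eq_single (0 : Fin (m+2))]
    · have hsub : Y.submatrix (0 : Fin (m+2)).succAbove c1.succAbove = Z := by
        rw [hZdef, hzeroAbove]
      rw [hY0, hsub, hdetZ,
        (by simp [hc1] : (((0 : Fin (m+2)) : ℕ) + ((c1 : Fin (m+2)) : ℕ)) = m)]
      ring
    · intro i _ hi
      have : Y i c1 = 0 := by simp [hYdef, hi]
      rw [this]; ring
    · simp
  rw [hdetX, hdetY] at hEE
  refine cancel_neg_one_pow m ?_
  linear_combination -hEE



theorem dj {m : ℕ} (M : Matrix (Fin (m+2)) (Fin (m+2)) R) :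
    M.det * (M.submatrix (Fin.succ ∘ Fin.castSucc) (Fin.castSucc ∘ Fin.castSucc)).det
    = (M.submatrix Fin.castSucc Fin.castSucc).det *
          (M.submatrix Fin.succ (Fin.succAbove ⟨m, by omega⟩)).det
        - (M.submatrix Fin.castSucc (Fin.succAbove ⟨m, by omega⟩)).det *
          (M.submatrix Fin.succ Fin.castSucc).det := by
  classical
  set G : Matrix (Fin (m+2)) (Fin (m+2)) (MvPolynomial (Fin (m+2) × Fin (m+2)) ℤ) :=
    Matrix.mvPolynomialX (Fin (m+2)) (Fin (m+2)) ℤ with hGdef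
  have hG := djX G
  have hGdet : G.det ≠ 0 := Matrix.det_mvPolynomialX_ne_zero _ _
  have hDJ := mul_left_cancel₀ hGdet hG
  have hmap : G.map (MvPolynomial.eval₂ (Int.castRingHom R)
      (fun p : (Fin (m+2) × Fin (m+2)) => M p.1 p.2)) = M :=
    Matrix.mvPolynomialX_map_eval₂ _ M
  set φ : MvPolynomial (Fin (m+2) × Fin (m+2)) ℤ →+* R :=
    MvPolynomial.eval₂Hom (Int.castRingHom R)
      (fun p : (Fin (m+2) × Fin (m+2)) => M p.1 p.2) with hφdef
  have hmap' : G.map φ = M := hmap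
  have := congrArg φ hDJ
  rw [_root_.map_mul, _root_.map_sub, _root_.map_mul, _root_.map_mul] at this
  simpa only [RingHom.map_det, RingHom.mapMatrix_apply, ← Matrix.submatrix_map, hmap'] using this

end CasAux

/-- The Casorati determinant `W_γ[f_1,…,f_n](x) = i^{n(n-1)/2} det(f_k(x_j^{(n)}))`
with `x_j^{(n)} = x + i((n+1)/2 - j)γ`; the empty Casoratian equals 1. -/
noncomputable def casoratian (γ : ℝ) {n : ℕ} (f : Fin n → ℂ → ℂ) (x : ℂ) : ℂ :=
  Complex.I ^ (n * (n - 1) / 2) *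
    Matrix.det (Matrix.of fun j k : Fin n =>
      f k (x + Complex.I * (((n : ℂ) + 1) / 2 - (((j : ℕ) : ℂ) + 1)) * (γ : ℂ)))

/-- Jacobi-type identity for the Casoratian:
`W_γ[W_γ[f_1,…,f_n,g], W_γ[f_1,…,f_n,h]](x) = W_γ[f_1,…,f_n](x) · W_γ[f_1,…,f_n,g,h](x)`
for all `n ≥ 0`. -/
theorem casoratian_jacobi (γ : ℝ) (hγ : γ ≠ 0) (n : ℕ) (f : Fin n → ℂ → ℂ)
    (g h : ℂ → ℂ) (x : ℂ) :
    casoratian γ ![casoratian γ (Fin.snoc f g), casoratian γ (Fin.snoc f h)] x =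
      casoratian γ f x * casoratian γ (Fin.snoc (Fin.snoc f g) h) x := by
  classical
  set F : Fin (n+2) → ℂ → ℂ := Fin.snoc (Fin.snoc f g) h with hF
  set M : Matrix (Fin (n+2)) (Fin (n+2)) ℂ := Matrix.of (fun j k : Fin (n+2) =>
    F k (x + Complex.I * (((((n+2 : ℕ)) : ℂ) + 1) / 2 - (((j : ℕ) : ℂ) + 1)) * (γ : ℂ)))
    with hM
  -- the outer 2×2 Casoratian
  have houter : ∀ A B : ℂ → ℂ, casoratian γ ![A, B] x
      = Complex.I * (A (x + Complex.I * (γ:ℂ) / 2) * B (x - Complex.I * (γ:ℂ) / 2)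
        - B (x + Complex.I * (γ:ℂ) / 2) * A (x - Complex.I * (γ:ℂ) / 2)) := by
    intro A B
    unfold casoratian
    rw [Matrix.det_fin_two]
    simp only [Matrix.of_apply, Matrix.cons_val', Matrix.cons_val_zero, Matrix.cons_val_one,
      Matrix.head_cons, Matrix.empty_val', Matrix.cons_val_fin_one, Matrix.head_fin_const]
    have e0 : x + Complex.I * ((((2:ℕ) : ℂ) + 1) / 2 - ((((0 : Fin 2) : ℕ) : ℂ) + 1)) * (γ:ℂ)
        = x + Complex.I * (γ:ℂ) / 2 := by push_cast [Fin.val_zero]; ring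
    have e1 : x + Complex.I * ((((2:ℕ) : ℂ) + 1) / 2 - ((((1 : Fin 2) : ℕ) : ℂ) + 1)) * (γ:ℂ)
        = x - Complex.I * (γ:ℂ) / 2 := by push_cast [Fin.val_one]; ring
    rw [e0, e1]
    norm_num
  -- top rows
  have htop : ∀ (u : Fin (n+1) → ℂ → ℂ) (cols : Fin (n+1) → Fin (n+2)),
      (∀ k, F (cols k) = u k) →
      casoratian γ u (x + Complex.I * (γ:ℂ) / 2)
        = Complex.I ^ ((n+1) * n / 2) * (M.submatrix Fin.castSucc cols).det := by
    intro u cols hcols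
    unfold casoratian
    have hmat : (Matrix.of fun j k : Fin (n+1) => u k ((x + Complex.I * (γ:ℂ) / 2)
          + Complex.I * (((((n+1:ℕ)) : ℂ) + 1) / 2 - (((j : ℕ) : ℂ) + 1)) * (γ:ℂ)))
        = M.submatrix Fin.castSucc cols := by
      ext j k
      simp only [Matrix.of_apply, Matrix.submatrix_apply, hM]
      rw [← hcols k]
      congr 1
      simp only [Fin.coe_castSucc]
      push_cast
      ring
    rw [hmat]
    congr 2
  -- bottom rows
  have hbot : ∀ (u : Fin (n+1) → ℂ → ℂ) (cols : Fin (n+1) → Fin (n+2)),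
      (∀ k, F (cols k) = u k) →
      casoratian γ u (x - Complex.I * (γ:ℂ) / 2)
        = Complex.I ^ ((n+1) * n / 2) * (M.submatrix Fin.succ cols).det := by
    intro u cols hcols
    unfold casoratian
    have hmat : (Matrix.of fun j k : Fin (n+1) => u k ((x - Complex.I * (γ:ℂ) / 2)
          + Complex.I * (((((n+1:ℕ)) : ℂ) + 1) / 2 - (((j : ℕ) : ℂ) + 1)) * (γ:ℂ)))
        = M.submatrix Fin.succ cols := by
      ext j k
      simp only [Matrix.of_apply, Matrix.submatrix_apply, hM]
      rw [← hcols k]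
      congr 1
      simp only [Fin.val_succ]
      push_cast
      ring
    rw [hmat]
    congr 2
  -- the inner n×n Casoratian
  have hmid : casoratian γ f x = Complex.I ^ (n * (n-1) / 2)
      * (M.submatrix (Fin.succ ∘ Fin.castSucc) (Fin.castSucc ∘ Fin.castSucc)).det := by
    unfold casoratian
    congr 1
    have hmat : (Matrix.of fun j k : Fin n => f k (x
          + Complex.I * ((((n:ℕ) : ℂ) + 1) / 2 - (((j : ℕ) : ℂ) + 1)) * (γ:ℂ)))
        = M.submatrix (Fin.succ ∘ Fin.castSucc) (Fin.castSucc ∘ Fin.castSucc) := by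
      ext j k
      simp only [Matrix.of_apply, Matrix.submatrix_apply, hM, Function.comp_apply]
      rw [show F (Fin.castSucc (Fin.castSucc k)) = f k by
        rw [hF, Fin.snoc_castSucc, Fin.snoc_castSucc]]
      congr 1
      simp only [Fin.val_succ, Fin.coe_castSucc]
      push_cast
      ring
    rw [hmat]
  -- the full (n+2)-Casoratian
  have hbig : casoratian γ F x = Complex.I ^ ((n+2) * (n+1) / 2) * M.det := by
    unfold casoratian
    rw [hM]
    congr 2
  -- column identifications
  have hcolFG : ∀ k : Fin (n+1), F (Fin.castSucc k) = (Fin.snoc f g : Fin (n+1) → ℂ → ℂ) k := by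
    intro k; rw [hF, Fin.snoc_castSucc]
  have hcolFH : ∀ k : Fin (n+1),
      F ((⟨n, by omega⟩ : Fin (n+2)).succAbove k) = (Fin.snoc f h : Fin (n+1) → ℂ → ℂ) k := by
    intro k
    cases k using Fin.lastCases with
    | last =>
      rw [Fin.succAbove_of_le_castSucc _ _ (by simp [Fin.le_def]), Fin.succ_last, hF,
        Fin.snoc_last, Fin.snoc_last]
    | cast i =>
      rw [Fin.succAbove_of_castSucc_lt _ _ (by simp [Fin.lt_def, i.isLt]), hF,
        Fin.snoc_castSucc, Fin.snoc_castSucc, Fin.snoc_castSucc]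
  -- assemble
  have hdj := CasAux.dj M
  rw [houter, htop _ _ hcolFG, htop _ _ hcolFH, hbot _ _ hcolFG, hbot _ _ hcolFH, hmid, hbig]
  set TG := (M.submatrix Fin.castSucc Fin.castSucc).det
  set BH := (M.submatrix Fin.succ (Fin.succAbove ⟨n, by omega⟩)).det
  set TH := (M.submatrix Fin.castSucc (Fin.succAbove ⟨n, by omega⟩)).det
  set BG := (M.submatrix Fin.succ Fin.castSucc).det
  set INR := (M.submatrix (Fin.succ ∘ Fin.castSucc) (Fin.castSucc ∘ Fin.castSucc)).det
  have hexp : 1 + ((n+1) * n / 2 + (n+1) * n / 2) = n * (n-1) / 2 + (n+2) * (n+1) / 2 := by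
    have h1 : (n+1) * n = n * (n-1) + n * 2 := by
      cases n with
      | zero => simp
      | succ m => simp only [Nat.add_sub_cancel]; ring
    have h2 : (n+2) * (n+1) = n * (n-1) + (2*n+1) * 2 := by
      cases n with
      | zero => norm_num
      | succ m => simp only [Nat.add_sub_cancel]; ring
    rw [h1, h2, Nat.add_mul_div_right _ _ (by norm_num : 0 < 2),
      Nat.add_mul_div_right _ _ (by norm_num : 0 < 2)]
    omega
  calc Complex.I * (Complex.I ^ ((n+1) * n / 2) * TG * (Complex.I ^ ((n+1) * n / 2) * BH)
        - Complex.I ^ ((n+1) * n / 2) * TH * (Complex.I ^ ((n+1) * n / 2) * BG))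
      = Complex.I ^ (1 + ((n+1) * n / 2 + (n+1) * n / 2)) * (TG * BH - TH * BG) := by
        rw [pow_add, pow_add, pow_one]; ring
    _ = Complex.I ^ (n * (n-1) / 2 + (n+2) * (n+1) / 2) * (M.det * INR) := by
        rw [hexp, ← hdj]
    _ = Complex.I ^ (n * (n-1) / 2) * INR * (Complex.I ^ ((n+2) * (n+1) / 2) * M.det) := by
        rw [pow_add]; ring
end

section
/- For any functions f_1,...,f_n, one has W_γ[1, f_1, ..., f_n](x) = W_γ[F_1, ..., F_n](x), where F_j(x) := -i( f_j(x + iγ/2) - f_j(x - iγ/2) ); that is, inserting the constant function 1 into a Casoratian reduces it to the Casoratian of the discrete derivatives. -/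
lemma det_cons_one_col {n : ℕ} (M : Matrix (Fin (n+1)) (Fin (n+1)) ℂ)
    (h : ∀ j, M j 0 = 1) :
    M.det = Matrix.det (Matrix.of fun j k : Fin n =>
      M j.succ k.succ - M (Fin.castSucc j) k.succ) := by
  set N : Matrix (Fin (n+1)) (Fin (n+1)) ℂ :=
    Fin.cases (M 0) (fun j => M j.succ - M (Fin.castSucc j)) with hN
  have hdet : M.det = N.det := by
    apply Matrix.det_eq_of_forall_row_eq_smul_add_pred (fun _ => (1 : ℂ))
    · intro j; simp [hN]
    · intro i j
      simp [hN]
  rw [hdet, Matrix.det_succ_column_zero]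
  rw [Fin.sum_univ_succ]
  have h0 : ∀ i : Fin n, N i.succ 0 = 0 := by
    intro i; simp [hN, h]
  simp only [h0, mul_zero, zero_mul, Finset.sum_const_zero, add_zero]
  simp only [hN, Fin.cases_zero, h, Fin.val_zero, pow_zero, one_mul, mul_one]
  congr 1

/-- Inserting the constant function 1 into a Casoratian reduces it to the Casoratian of
the discrete derivatives: `W_γ[1, f_1, …, f_n](x) = W_γ[F_1, …, F_n](x)` where
`F_j(x) = -i(f_j(x + iγ/2) - f_j(x - iγ/2))`. -/
theorem casoratian_cons_one (γ : ℝ) (n : ℕ) (f : Fin n → ℂ → ℂ) (x : ℂ) :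
    casoratian γ (Fin.cons (fun _ => (1 : ℂ)) f) x =
      casoratian γ
        (fun j y => -Complex.I *
          (f j (y + Complex.I * (γ : ℂ) / 2) - f j (y - Complex.I * (γ : ℂ) / 2))) x := by
  simp only [casoratian]
  set M : Matrix (Fin (n+1)) (Fin (n+1)) ℂ := Matrix.of fun j k : Fin (n+1) =>
      (Fin.cons (fun _ => (1:ℂ)) f : Fin (n+1) → ℂ → ℂ) k
        (x + Complex.I * ((((n+1 : ℕ) : ℂ) + 1)/2 - (((j:ℕ):ℂ)+1)) * (γ:ℂ)) with hM
  have key := det_cons_one_col M (fun j => by simp [hM])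
  rw [key]
  -- identify the RHS matrix as I • diff matrix
  have hmat : (Matrix.of fun j k : Fin n =>
      (fun j y => -Complex.I *
          (f j (y + Complex.I * (γ : ℂ) / 2) - f j (y - Complex.I * (γ : ℂ) / 2))) k
        (x + Complex.I * (((n : ℂ) + 1)/2 - (((j:ℕ):ℂ)+1)) * (γ:ℂ)))
      = Complex.I • Matrix.of (fun j k : Fin n =>
          M j.succ k.succ - M (Fin.castSucc j) k.succ) := by
    ext j k
    simp only [Matrix.of_apply, Matrix.smul_apply, hM, Fin.cons_succ, smul_eq_mul,
      Fin.val_succ, Fin.coe_castSucc]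
    have h1 : x + Complex.I * (((n : ℂ) + 1)/2 - (((j:ℕ):ℂ)+1)) * (γ:ℂ)
        + Complex.I * (γ:ℂ) / 2
        = x + Complex.I * ((((n+1 : ℕ) : ℂ) + 1)/2 - (((j:ℕ):ℂ)+1)) * (γ:ℂ) := by
      push_cast; ring
    have h2 : x + Complex.I * (((n : ℂ) + 1)/2 - (((j:ℕ):ℂ)+1)) * (γ:ℂ)
        - Complex.I * (γ:ℂ) / 2
        = x + Complex.I * ((((n+1 : ℕ) : ℂ) + 1)/2 - ((((j:ℕ)+1:ℕ):ℂ)+1)) * (γ:ℂ) := by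
      push_cast; ring
    rw [h1, h2]
    ring_nf
  rw [hmat, Matrix.det_smul]
  simp only [Fintype.card_fin, smul_eq_mul]
  rw [← mul_assoc, ← pow_add]
  congr 2
  have h2 : 2 ∣ n * (n - 1) := by
    rcases Nat.even_or_odd n with he | ho
    · exact Dvd.dvd.mul_right he.two_dvd _
    · exact Dvd.dvd.mul_left (Nat.Odd.sub_odd ho odd_one).two_dvd _
  cases n with
  | zero => rfl
  | succ m =>
    have : (m + 1 + 1) * (m + 1 + 1 - 1) = (m+1) * ((m+1) - 1) + (m+1) * 2 := by
      simp; ring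
    rw [this, Nat.add_mul_div_right _ _ (by norm_num : 0 < 2)]
end

section
/- For the Wilson case, the potential twist relation V(x;λ) + V*(x;λ) = V'(x;λ) + V'*(x;λ) + (b₁ - 2) holds, where V(x;λ) = (∏_{j=1}^4 (a_j + ix)) / (2ix(2ix+1)), V'(x;λ) := V(x; t(λ)) with t(λ) = (1-a₁,1-a₂,1-a₃,1-a₄), b₁ = a₁+a₂+a₃+a₄, and V*(x;λ) := V(x; λ) with i replaced by -i (i.e., V*(x;λ) = (∏_j (a_j - ix)) / (-2ix(-2ix+1)) when all a_j are real). -/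
set_option maxHeartbeats 1000000

open Complex

lemma wilson_twist_aux (a₀ a₁ a₂ a₃ u : ℂ) (hu : u ≠ 0)
    (h2 : 2 * u + 1 ≠ 0) (h4 : -2 * u + 1 ≠ 0) :
    (a₀ + u) * ((a₁ + u) * ((a₂ + u) * (a₃ + u))) / (2 * u * (2 * u + 1)) +
      (a₀ - u) * ((a₁ - u) * ((a₂ - u) * (a₃ - u))) / ((-2 * u) * (-2 * u + 1)) =
    (1 - a₀ + u) * ((1 - a₁ + u) * ((1 - a₂ + u) * (1 - a₃ + u))) / (2 * u * (2 * u + 1)) +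
      (1 - a₀ - u) * ((1 - a₁ - u) * ((1 - a₂ - u) * (1 - a₃ - u))) /
        ((-2 * u) * (-2 * u + 1)) -
      (2 - (a₀ + a₁ + a₂ + a₃)) := by
  have hA : 2 * u * (2 * u + 1) ≠ 0 := mul_ne_zero (by simpa using hu) h2
  have hB : (-2 * u) * (-2 * u + 1) ≠ 0 := mul_ne_zero (by simpa using hu) h4
  have hAB : (2 * u * (2 * u + 1)) * ((-2 * u) * (-2 * u + 1)) ≠ 0 := mul_ne_zero hA hB
  rw [div_add_div _ _ hA hB, div_add_div _ _ hA hB, div_sub' hAB,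
    div_eq_div_iff hAB hAB]
  ring

/-- The Wilson additive potential twist relation: with
`V(x) = ∏_j (a_j + ix)/(2ix(2ix+1))`, `V*(x) = ∏_j (a_j - ix)/((-2ix)(-2ix+1))`, and
`V', V'*` the same with `a_j` replaced by `1 - a_j`, one has
`V(x) + V*(x) = V'(x) + V'*(x) - (2 - b₁)` for real `x ≠ 0`, where `b₁ = Σ a_j`. -/
theorem wilson_additive_twist (a : Fin 4 → ℝ) (x : ℝ) (hx : x ≠ 0) :
    (∏ j, ((a j : ℂ) + Complex.I * (x : ℂ))) /
        (2 * Complex.I * (x : ℂ) * (2 * Complex.I * (x : ℂ) + 1)) +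
      (∏ j, ((a j : ℂ) - Complex.I * (x : ℂ))) /
        ((-2 * Complex.I * (x : ℂ)) * (-2 * Complex.I * (x : ℂ) + 1)) =
    (∏ j, (1 - (a j : ℂ) + Complex.I * (x : ℂ))) /
        (2 * Complex.I * (x : ℂ) * (2 * Complex.I * (x : ℂ) + 1)) +
      (∏ j, (1 - (a j : ℂ) - Complex.I * (x : ℂ))) /
        ((-2 * Complex.I * (x : ℂ)) * (-2 * Complex.I * (x : ℂ) + 1)) -
      (2 - (∑ j, ((a j : ℂ)))) := by
  have hxc : (x : ℂ) ≠ 0 := Complex.ofReal_ne_zero.mpr hx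
  have hu : Complex.I * (x : ℂ) ≠ 0 := mul_ne_zero Complex.I_ne_zero hxc
  have h2 : 2 * (Complex.I * (x : ℂ)) + 1 ≠ 0 := by
    intro h
    have := congrArg Complex.re h
    simp [Complex.add_re, Complex.mul_re] at this
  have h4 : -2 * (Complex.I * (x : ℂ)) + 1 ≠ 0 := by
    intro h
    have := congrArg Complex.re h
    simp [Complex.add_re, Complex.mul_re] at this
  have := wilson_twist_aux (a 0) (a 1) (a 2) (a 3) (Complex.I * (x : ℂ)) hu h2 h4
  simp only [Fin.prod_univ_four, Fin.sum_univ_four]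
  convert this using 3 <;> ring
end

section
/- For the Askey-Wilson case, the additive twist relation V(x;λ) + V*(x;λ) = α(λ)( V'(x;λ) + V'*(x;λ) ) - α'(λ) holds with α(λ) = b₄ q^{-2} and α'(λ) = -(1-q)(1 - b₄ q^{-2}), where V(x;λ) = ∏_{j=1}^4 (1 - a_j e^{ix}) / ((1-e^{2ix})(1-qe^{2ix})), V' is V with a_j → q a_j^{-1}, and * replaces e^{ix} by e^{-ix}. -/
/-- The Askey-Wilson potential `V(z) = ∏_j (1 - a_j z)/((1-z²)(1-qz²))` in the variable
`z = e^{ix}`. -/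
noncomputable def awV (q : ℂ) (a : Fin 4 → ℂ) (z : ℂ) : ℂ :=
  (∏ j, (1 - a j * z)) / ((1 - z ^ 2) * (1 - q * z ^ 2))

/-- The starred Askey-Wilson potential `V*(z) = ∏_j (1 - a_j z⁻¹)/((1-z⁻²)(1-qz⁻²))`. -/
noncomputable def awVs (q : ℂ) (a : Fin 4 → ℂ) (z : ℂ) : ℂ :=
  (∏ j, (1 - a j * z⁻¹)) / ((1 - (z⁻¹) ^ 2) * (1 - q * (z⁻¹) ^ 2))

set_option maxHeartbeats 1000000 in
lemma awVs_eq (q : ℂ) (hq : q ≠ 0) (a : Fin 4 → ℂ) (z : ℂ) (hz : z ≠ 0)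
    (hz1 : z ^ 2 - 1 ≠ 0) (hzq : z ^ 2 - q ≠ 0)
    (h1' : 1 - (z⁻¹) ^ 2 ≠ 0) (h3 : 1 - q * (z⁻¹) ^ 2 ≠ 0)
    (hDs : (1 - (z⁻¹) ^ 2) * (1 - q * (z⁻¹) ^ 2) ≠ 0)
    (hD2 : (z ^ 2 - 1) * (z ^ 2 - q) ≠ 0) :
    awVs q a z = (∏ j, (z - a j)) / ((z ^ 2 - 1) * (z ^ 2 - q)) := by
  rw [awVs, div_eq_div_iff hDs hD2, Fin.prod_univ_four, Fin.prod_univ_four]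
  field_simp
  try ring
  try (left; trivial)
  try (left; ring)
  try (right; trivial)
  try (right; ring)

set_option maxHeartbeats 1000000 in
lemma awV_twist_eq (q : ℂ) (hq : q ≠ 0) (a : Fin 4 → ℂ) (ha0 : a 0 ≠ 0) (ha1 : a 1 ≠ 0)
    (ha2 : a 2 ≠ 0) (ha3 : a 3 ≠ 0) (z : ℂ)
    (hD1 : (1 - z ^ 2) * (1 - q * z ^ 2) ≠ 0) :
    awV q (fun j => q / a j) z
      = (∏ j, (a j - q * z)) / ((a 0 * a 1 * a 2 * a 3) * ((1 - z ^ 2) * (1 - q * z ^ 2))) := by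
  have hb : a 0 * a 1 * a 2 * a 3 ≠ 0 :=
    mul_ne_zero (mul_ne_zero (mul_ne_zero ha0 ha1) ha2) ha3
  rw [awV, div_eq_div_iff hD1 (mul_ne_zero hb hD1), Fin.prod_univ_four, Fin.prod_univ_four]
  field_simp
  try ring
  try (left; trivial)
  try (left; ring)
  try (right; trivial)
  try (right; ring)

set_option maxHeartbeats 1000000 in
lemma awVs_twist_eq (q : ℂ) (hq : q ≠ 0) (a : Fin 4 → ℂ) (ha0 : a 0 ≠ 0) (ha1 : a 1 ≠ 0)
    (ha2 : a 2 ≠ 0) (ha3 : a 3 ≠ 0) (z : ℂ) (hz : z ≠ 0)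
    (hz1 : z ^ 2 - 1 ≠ 0) (hzq : z ^ 2 - q ≠ 0)
    (h1' : 1 - (z⁻¹) ^ 2 ≠ 0) (h3 : 1 - q * (z⁻¹) ^ 2 ≠ 0)
    (hDs : (1 - (z⁻¹) ^ 2) * (1 - q * (z⁻¹) ^ 2) ≠ 0)
    (hD2 : (z ^ 2 - 1) * (z ^ 2 - q) ≠ 0) :
    awVs q (fun j => q / a j) z
      = (∏ j, (a j * z - q)) / ((a 0 * a 1 * a 2 * a 3) * ((z ^ 2 - 1) * (z ^ 2 - q))) := by
  have hb : a 0 * a 1 * a 2 * a 3 ≠ 0 :=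
    mul_ne_zero (mul_ne_zero (mul_ne_zero ha0 ha1) ha2) ha3
  rw [awVs_eq q hq (fun j => q / a j) z hz hz1 hzq h1' h3 hDs hD2,
    div_eq_div_iff hD2 (mul_ne_zero hb hD2), Fin.prod_univ_four, Fin.prod_univ_four]
  field_simp
  try ring
  try (left; trivial)
  try (left; ring)
  try (right; trivial)
  try (right; ring)

lemma aw_small (S S' D b q : ℂ) (hq : q ≠ 0) (hb : b ≠ 0) (hD : D ≠ 0)
    (key : q ^ 2 * S = S' + (1 - q) * (q ^ 2 - b) * D) :
    S / D = b * (q ^ 2)⁻¹ * (S' / (b * D)) + (1 - q) * (1 - b * (q ^ 2)⁻¹) := by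
  field_simp
  linear_combination key

lemma aw_abstract (P Q P' Q' D1 D2 b q : ℂ) (hq : q ≠ 0) (hb : b ≠ 0) (hD1 : D1 ≠ 0)
    (hD2 : D2 ≠ 0)
    (key : q ^ 2 * (P * D2 + Q * D1)
      = (P' * D2 + Q' * D1) + (1 - q) * (q ^ 2 - b) * (D1 * D2)) :
    P / D1 + Q / D2 =
      b * (q ^ 2)⁻¹ * (P' / (b * D1) + Q' / (b * D2)) + (1 - q) * (1 - b * (q ^ 2)⁻¹) := by
  have hD : D1 * D2 ≠ 0 := mul_ne_zero hD1 hD2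
  have e2 : P' / (b * D1) + Q' / (b * D2) = (P' * D2 + Q' * D1) / (b * (D1 * D2)) := by
    rw [div_add_div _ _ (mul_ne_zero hb hD1) (mul_ne_zero hb hD2),
      div_eq_div_iff (mul_ne_zero (mul_ne_zero hb hD1) (mul_ne_zero hb hD2))
        (mul_ne_zero hb hD)]
    ring
  rw [div_add_div _ _ hD1 hD2, e2]
  exact aw_small _ _ _ _ _ hq hb hD (by linear_combination key)

set_option maxHeartbeats 2000000 in
lemma aw_key (q b0 b1 b2 b3 z : ℂ) :
    q ^ 2 * ((1 - b0 * z) * (1 - b1 * z) * (1 - b2 * z) * (1 - b3 * z)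
        * ((z ^ 2 - 1) * (z ^ 2 - q))
      + (z - b0) * (z - b1) * (z - b2) * (z - b3) * ((1 - z ^ 2) * (1 - q * z ^ 2)))
    = ((b0 - q * z) * (b1 - q * z) * (b2 - q * z) * (b3 - q * z) * ((z ^ 2 - 1) * (z ^ 2 - q))
        + (b0 * z - q) * (b1 * z - q) * (b2 * z - q) * (b3 * z - q)
          * ((1 - z ^ 2) * (1 - q * z ^ 2)))
      + (1 - q) * (q ^ 2 - b0 * b1 * b2 * b3)
        * ((1 - z ^ 2) * (1 - q * z ^ 2) * ((z ^ 2 - 1) * (z ^ 2 - q))) := by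
  ring

/-- The Askey-Wilson additive twist relation:
`V + V* = α (V' + V'*) - α'` with `α = b₄ q⁻²`, `α' = -(1-q)(1 - b₄ q⁻²)`, where the twist
replaces `a_j` by `q a_j⁻¹` and `b₄ = a₁a₂a₃a₄`. -/
theorem aw_additive_twist (q : ℂ) (hq : q ≠ 0) (a : Fin 4 → ℂ) (ha : ∀ j, a j ≠ 0)
    (z : ℂ) (hz : z ≠ 0) (h1 : 1 - z ^ 2 ≠ 0) (h2 : 1 - q * z ^ 2 ≠ 0)
    (h3 : 1 - q * (z⁻¹) ^ 2 ≠ 0) :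
    awV q a z + awVs q a z =
      (∏ j, a j) * q ^ (-2 : ℤ) *
          (awV q (fun j => q / a j) z + awVs q (fun j => q / a j) z) +
        (1 - q) * (1 - (∏ j, a j) * q ^ (-2 : ℤ)) := by
  have hD1 : (1 - z ^ 2) * (1 - q * z ^ 2) ≠ 0 := mul_ne_zero h1 h2
  have f2 : 1 - q * (z⁻¹) ^ 2 = (z ^ 2 - q) * (z⁻¹) ^ 2 := by field_simp
  have hz1 : z ^ 2 - 1 ≠ 0 := fun h => h1 (by linear_combination -h)
  have hzq : z ^ 2 - q ≠ 0 := fun h => h3 (by rw [f2, h, zero_mul])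
  have h1' : 1 - (z⁻¹) ^ 2 ≠ 0 := by
    have : 1 - (z⁻¹) ^ 2 = (z ^ 2 - 1) * (z⁻¹) ^ 2 := by field_simp
    rw [this]; exact mul_ne_zero hz1 (pow_ne_zero 2 (inv_ne_zero hz))
  have hD2 : (z ^ 2 - 1) * (z ^ 2 - q) ≠ 0 := mul_ne_zero hz1 hzq
  have hDs : (1 - (z⁻¹) ^ 2) * (1 - q * (z⁻¹) ^ 2) ≠ 0 := mul_ne_zero h1' h3
  have hb : a 0 * a 1 * a 2 * a 3 ≠ 0 :=
    mul_ne_zero (mul_ne_zero (mul_ne_zero (ha 0) (ha 1)) (ha 2)) (ha 3)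
  rw [awVs_eq q hq a z hz hz1 hzq h1' h3 hDs hD2,
    awV_twist_eq q hq a (ha 0) (ha 1) (ha 2) (ha 3) z hD1,
    awVs_twist_eq q hq a (ha 0) (ha 1) (ha 2) (ha 3) z hz hz1 hzq h1' h3 hDs hD2, awV]
  rw [Fin.prod_univ_four, Fin.prod_univ_four, Fin.prod_univ_four, Fin.prod_univ_four,
    Fin.prod_univ_four]
  rw [zpow_neg, show ((2:ℤ) = (2:ℕ)) from rfl, zpow_natCast]
  exact aw_abstract _ _ _ _ _ _ _ q hq hb hD1 hD2 (aw_key q (a 0) (a 1) (a 2) (a 3) z)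
end

section
/- For the Wilson case, the shape-invariance potential relation V(x; λ + δ) = (φ(x - i)/φ(x)) · V(x - i/2; λ) holds, where V(x;λ) = ∏_{j=1}^4 (a_j + ix) / (2ix(2ix+1)), δ = (1/2,1/2,1/2,1/2), φ(x) = 2x, γ = 1, and κ = 1. -/
/-- The Wilson shape-invariance relation (`γ = 1`, `κ = 1`, `φ(x) = 2x`,
`δ = (1/2,1/2,1/2,1/2)`): with `V(x; a) = ∏_j (a_j + ix)/(2ix(2ix+1))`, one has
`V(x; λ+δ) = (φ(x-i)/φ(x)) V(x - i/2; λ)`. -/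
theorem wilson_shape_invariance (a : Fin 4 → ℂ) (x : ℂ) (hx : x ≠ 0)
    (h1 : 2 * Complex.I * x + 1 ≠ 0) (h2 : x ≠ Complex.I) :
    (∏ j, (a j + 1 / 2 + Complex.I * x)) /
        (2 * Complex.I * x * (2 * Complex.I * x + 1)) =
      ((x - Complex.I) / x) *
        ((∏ j, (a j + Complex.I * (x - Complex.I / 2))) /
          (2 * Complex.I * (x - Complex.I / 2) *
            (2 * Complex.I * (x - Complex.I / 2) + 1))) := by
  have key : Complex.I * Complex.I = -1 := Complex.I_mul_I
  have e1 : Complex.I * (x - Complex.I / 2) = Complex.I * x + 1/2 := by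
    linear_combination (-1/2 : ℂ) * key
  have e2 : 2 * Complex.I * (x - Complex.I / 2) = 2 * Complex.I * x + 1 := by
    linear_combination (-1 : ℂ) * key
  have e3 : 2 * Complex.I * (x - Complex.I / 2) + 1 = 2 * Complex.I * (x - Complex.I) := by
    linear_combination key
  have hprod : (∏ j, (a j + 1 / 2 + Complex.I * x))
      = ∏ j, (a j + Complex.I * (x - Complex.I / 2)) := by
    refine Finset.prod_congr rfl fun j _ => ?_
    rw [e1]; ring
  rw [hprod, e3, e2]
  have hxi : x - Complex.I ≠ 0 := sub_ne_zero.mpr h2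
  have h2i : (2 : ℂ) * Complex.I ≠ 0 := mul_ne_zero two_ne_zero Complex.I_ne_zero
  rw [div_mul_div_comm, div_eq_div_iff
    (mul_ne_zero (mul_ne_zero h2i hx) h1)
    (mul_ne_zero hx (mul_ne_zero h1 (mul_ne_zero h2i hxi)))]
  ring
end

section
/- For the Askey-Wilson case, the shape-invariance relation V(x; λ + δ) = q · (φ(x - iγ)/φ(x)) · V(x - iγ/2; λ) holds (κ = q^{-1}), where V(x;λ) = ∏_{j=1}^4 (1 - a_j e^{ix}) / ((1-e^{2ix})(1-qe^{2ix})), the shift λ + δ replaces a_j by q^{1/2} a_j, γ = log q, and φ(x) = 2 sin x. -/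
/-- The Askey-Wilson shape-invariance relation (`κ = q⁻¹`, `γ = log q`,
`φ(z) = -i(z - z⁻¹)`): `V(x; λ+δ) = q (φ(x - iγ)/φ(x)) V(x - iγ/2; λ)`, i.e. in terms of
`z = e^{ix}`, `V(z; q^{1/2}a) = q (φ(qz)/φ(z)) V(q^{1/2}z; a)`. -/
theorem aw_shape_invariance (q : ℝ) (hq0 : 0 < q) (hq1 : q < 1) (a : Fin 4 → ℂ)
    (z : ℂ) (hz : z ≠ 0) (h1 : 1 - z ^ 2 ≠ 0) (h2 : 1 - (q : ℂ) * z ^ 2 ≠ 0)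
    (h3 : 1 - (q : ℂ) ^ 2 * z ^ 2 ≠ 0) :
    awV (q : ℂ) (fun j => (Real.sqrt q : ℂ) * a j) z =
      (q : ℂ) *
        ((-Complex.I * ((q : ℂ) * z - ((q : ℂ) * z)⁻¹)) /
          (-Complex.I * (z - z⁻¹))) *
        awV (q : ℂ) a ((Real.sqrt q : ℂ) * z) := by
  have hs : ((Real.sqrt q : ℂ)) ^ 2 = (q : ℂ) := by
    rw [← Complex.ofReal_pow, Real.sq_sqrt hq0.le]
  have hqne : (q : ℂ) ≠ 0 := by exact_mod_cast hq0.ne'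
  have hprod : (∏ j, (1 - (Real.sqrt q : ℂ) * a j * z)) =
      ∏ j, (1 - a j * ((Real.sqrt q : ℂ) * z)) := by
    apply Finset.prod_congr rfl; intro j _; ring
  have hfac : (q : ℂ) * ((-Complex.I * ((q : ℂ) * z - ((q : ℂ) * z)⁻¹)) /
      (-Complex.I * (z - z⁻¹))) = (1 - (q:ℂ)^2 * z^2) / (1 - z^2) := by
    have hd : -Complex.I * (z - z⁻¹) ≠ 0 := by
      have : z - z⁻¹ = -(1 - z^2) / z := by field_simp; ring
      rw [this]
      exact mul_ne_zero (neg_ne_zero.mpr Complex.I_ne_zero)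
        (div_ne_zero (neg_ne_zero.mpr h1) hz)
    rw [mul_div_assoc', div_eq_div_iff hd h1]
    field_simp
    ring
  unfold awV
  simp only [hprod]
  rw [hfac, mul_pow, hs]
  rw [div_mul_div_comm, div_eq_div_iff (by exact mul_ne_zero h1 h2)
    (by rw [show (q:ℂ) * ((q:ℂ) * z^2) = (q:ℂ)^2 * z^2 by ring]; exact mul_ne_zero h1 (mul_ne_zero h2 h3))]
  ring
end
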